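/- Let 0 < q < 1 and r ≥ 1. The (r+1)-st derivative of x ↦ log G_r(x+1;q) tends to 0 as x → ∞ along the positive reals. -/

import Mathlib

open Finset Filter Topology

/-- Real generalized binomial coefficient C(x,k) = x(x-1)⋯(x-k+1)/k!. -/
noncomputable def binomR (x : ℝ) (k : ℕ) : ℝ :=
  (∏ i ∈ Finset.range k, (x - i)) / (Nat.factorial k)

/-- Real version of g_r(x,n). -/
noncomputable def qgR (r : ℕ) (x : ℝ) (n : ℕ) : ℝ :=
  ∑ m ∈ Finset.Icc 1 (r - 1),
    (-1 : ℝ) ^ (m - 1) * binomR x (r - m) * (Nat.choose (n + m - 2) (m - 1))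

/-- `logQG q r x = log G_r(x+1; q)`:
`-C(x,r) log(1-q) + ∑_{n≥1} [(-1)^r C(n+r-2,r-1) log((1-q^{x+n})/(1-q^n)) + g_r(x,n) log(1-q^n)]`. -/
noncomputable def logQG (q : ℝ) (r : ℕ) (x : ℝ) : ℝ :=
  -(binomR x r) * Real.log (1 - q) +
    ∑' n : ℕ,
      ((-1 : ℝ) ^ r * (Nat.choose (n + 1 + r - 2) (r - 1)) *
          Real.log ((1 - q ^ (x + n + 1)) / (1 - q ^ ((n : ℝ) + 1)))
        + qgR r x (n + 1) * Real.log (1 - q ^ ((n : ℝ) + 1)))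

noncomputable def cR (r n : ℕ) : ℝ := (Nat.choose (n + r - 1) (r - 1) : ℝ)

noncomputable def aC (q : ℝ) (r : ℕ) (p : ℕ × ℕ) : ℝ :=
  (-1 : ℝ) ^ (r + 1) * cR r p.1 * q ^ ((p.1 + 1) * (p.2 + 1)) / ((p.2 : ℝ) + 1)

noncomputable def bC (q : ℝ) (p : ℕ × ℕ) : ℝ := ((p.2 : ℝ) + 1) * Real.log q

noncomputable def SS (q : ℝ) (r j : ℕ) (x : ℝ) : ℝ :=
  ∑' p : ℕ × ℕ, aC q r p * bC q p ^ j * Real.exp (bC q p * x)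

noncomputable def uB (q : ℝ) (r : ℕ) (p : ℕ × ℕ) : ℝ :=
  |aC q r p| * (1 + ((p.2 : ℝ) + 1) * |Real.log q|) ^ (r + 1)

noncomputable def emQ (q : ℝ) (m : ℕ) : ℝ :=
  ∑' n : ℕ, (Nat.choose (n + m - 1) (m - 1) : ℝ) * Real.log (1 - q ^ (n + 1))

noncomputable def bpoly (k : ℕ) : Polynomial ℝ :=
  Polynomial.C ((k.factorial : ℝ)⁻¹) * ∏ i ∈ Finset.range k, (Polynomial.X - Polynomial.C (i : ℝ))

noncomputable def PP (q : ℝ) (r : ℕ) : Polynomial ℝ :=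
  -(Polynomial.C (Real.log (1 - q)) * bpoly r)
    + ∑ m ∈ Finset.Icc 1 (r - 1), Polynomial.C ((-1 : ℝ) ^ (m - 1) * emQ q m) * bpoly (r - m)
    + Polynomial.C (-((-1 : ℝ) ^ r * emQ q r))

lemma eval_bpoly (x : ℝ) (k : ℕ) : (bpoly k).eval x = binomR x k := by
  simp [bpoly, binomR, div_eq_inv_mul, Polynomial.eval_prod]

lemma natDegree_bpoly_le (k : ℕ) : (bpoly k).natDegree ≤ k := by
  refine (Polynomial.natDegree_mul_le).trans ?_
  simp only [Polynomial.natDegree_C, zero_add]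
  refine (Polynomial.natDegree_prod_le _ _).trans ?_
  have h : ∑ i ∈ Finset.range k, (Polynomial.X - Polynomial.C (i:ℝ)).natDegree
      ≤ ∑ _i ∈ Finset.range k, 1 :=
    Finset.sum_le_sum (fun i _ => (Polynomial.natDegree_X_sub_C (i:ℝ)).le)
  simpa using h

lemma natDegree_PP_le (q : ℝ) (r : ℕ) : (PP q r).natDegree ≤ r := by
  refine (Polynomial.natDegree_add_le _ _).trans ?_
  simp only [Polynomial.natDegree_C, max_le_iff]
  refine ⟨(Polynomial.natDegree_add_le _ _).trans ?_, Nat.zero_le _⟩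
  simp only [Polynomial.natDegree_neg, max_le_iff]
  constructor
  · exact (Polynomial.natDegree_mul_le).trans (by simpa using natDegree_bpoly_le r)
  · refine (Polynomial.natDegree_sum_le _ _).trans ?_
    rw [Finset.fold_max_le]
    refine ⟨Nat.zero_le _, ?_⟩
    intro m _
    refine (Polynomial.natDegree_mul_le).trans ?_
    rw [Polynomial.natDegree_C, zero_add]
    exact (natDegree_bpoly_le (r - m)).trans (Nat.sub_le _ _)

lemma summable_add_one_pow_mul_geometric (e : ℕ) {ρ : ℝ} (h : |ρ| < 1) :
    Summable (fun n : ℕ => ((n : ℝ) + 1) ^ e * ρ ^ n) := by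
  have h' : ‖ρ‖ < 1 := by rwa [Real.norm_eq_abs]
  have key : ∀ n : ℕ, ((n : ℝ) + 1) ^ e * ρ ^ n
      = ∑ j ∈ Finset.range (e + 1), (e.choose j : ℝ) * ((n : ℝ) ^ j * ρ ^ n) := by
    intro n
    rw [add_pow, Finset.sum_mul]
    exact Finset.sum_congr rfl fun j _ => by rw [one_pow]; ring
  refine Summable.congr ?_ (fun n => (key n).symm)
  exact summable_sum fun j _ =>
    (summable_pow_mul_geometric_of_norm_lt_one j h').mul_left _

lemma summable_shift_pow_mul_geometric (e : ℕ) {ρ : ℝ} (h0 : 0 ≤ ρ) (h1 : ρ < 1) :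
    Summable (fun n : ℕ => ((n : ℝ) + e) ^ e * ρ ^ n) := by
  have habs : |ρ| < 1 := by rwa [abs_of_nonneg h0]
  refine Summable.of_nonneg_of_le (fun n => by positivity) (fun n => ?_)
    ((summable_add_one_pow_mul_geometric e habs).mul_left (((e : ℝ) + 1) ^ e))
  have hb : ((n : ℝ) + e) ≤ ((e : ℝ) + 1) * ((n : ℝ) + 1) := by
    have h1 : (0:ℝ) ≤ (n:ℝ) := Nat.cast_nonneg n
    have h2 : (0:ℝ) ≤ (e:ℝ) := Nat.cast_nonneg e
    nlinarith
  calc ((n : ℝ) + e) ^ e * ρ ^ n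
      ≤ (((e : ℝ) + 1) * ((n : ℝ) + 1)) ^ e * ρ ^ n :=
        mul_le_mul_of_nonneg_right (pow_le_pow_left₀ (by positivity) hb e) (by positivity)
    _ = ((e : ℝ) + 1) ^ e * (((n : ℝ) + 1) ^ e * ρ ^ n) := by rw [mul_pow]; ring

lemma choose_le_bound (r m n : ℕ) (hm : m ≤ r) (hr : 1 ≤ r) :
    (Nat.choose (n + m - 1) (m - 1) : ℝ) ≤ ((n : ℝ) + r) ^ r := by
  have h2 : ((n + m - 1 : ℕ) : ℝ) ≤ (n : ℝ) + r := by
    have hle : n + m - 1 ≤ n + r := by omega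
    calc ((n + m - 1 : ℕ) : ℝ) ≤ ((n + r : ℕ) : ℝ) := Nat.cast_le.mpr hle
      _ = (n : ℝ) + r := by push_cast; ring
  have h1r : (1:ℝ) ≤ (n : ℝ) + r := by
    have : (1:ℝ) ≤ (r:ℝ) := by exact_mod_cast hr
    have : (0:ℝ) ≤ (n:ℝ) := Nat.cast_nonneg n
    linarith
  calc (Nat.choose (n + m - 1) (m - 1) : ℝ)
      ≤ ((n + m - 1 : ℕ) : ℝ) ^ (m - 1) := by
        exact_mod_cast Nat.cast_le.mpr (Nat.choose_le_pow _ _)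
    _ ≤ ((n : ℝ) + r) ^ (m - 1) := pow_le_pow_left₀ (Nat.cast_nonneg _) h2 _
    _ ≤ ((n : ℝ) + r) ^ r := pow_le_pow_right₀ h1r (by omega)

lemma abs_log_one_sub_le {q t : ℝ} (hq1 : q < 1) (ht : 0 < t) (htq : t ≤ q) :
    |Real.log (1 - t)| ≤ t / (1 - q) := by
  have h1t : 0 < 1 - t := by linarith
  have h1q : 0 < 1 - q := by linarith
  have hlog : Real.log (1 - t) ≤ 0 := Real.log_nonpos (by linarith) (by linarith)
  rw [abs_of_nonpos hlog, ← Real.log_inv]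
  refine (Real.log_le_sub_one_of_pos (inv_pos.mpr h1t)).trans ?_
  rw [inv_eq_one_div]
  have heq : 1 / (1 - t) - 1 = t / (1 - t) := by field_simp; ring
  rw [heq]
  have hle : 1 - q ≤ 1 - t := by linarith
  gcongr

lemma summable_choose_log {q : ℝ} (hq : 0 < q) (hq1 : q < 1) {r : ℕ} (m : ℕ) (hm : m ≤ r)
    (hr : 1 ≤ r) :
    Summable (fun n : ℕ => (Nat.choose (n + m - 1) (m - 1) : ℝ) * Real.log (1 - q ^ (n + 1))) := by
  have h1q : 0 < 1 - q := by linarith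
  refine Summable.of_norm_bounded
    (g := fun n : ℕ => (((n : ℝ) + r) ^ r * q ^ n) * (q / (1 - q))) ?_ (fun n => ?_)
  · exact (summable_shift_pow_mul_geometric r hq.le hq1).mul_right _
  · have htq : q ^ (n + 1) ≤ q := by
      calc q ^ (n + 1) ≤ q ^ 1 := pow_le_pow_of_le_one hq.le hq1.le (by omega)
        _ = q := pow_one q
    have ht0 : 0 < q ^ (n + 1) := by positivity
    rw [norm_mul, Real.norm_eq_abs, Real.norm_eq_abs, abs_of_nonneg (by positivity)]
    calc (Nat.choose (n + m - 1) (m - 1) : ℝ) * |Real.log (1 - q ^ (n + 1))|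
        ≤ ((n : ℝ) + r) ^ r * (q ^ (n + 1) / (1 - q)) := by
          apply mul_le_mul (choose_le_bound r m n hm hr) (abs_log_one_sub_le hq1 ht0 htq)
            (abs_nonneg _) (by positivity)
      _ = (((n : ℝ) + r) ^ r * q ^ n) * (q / (1 - q)) := by ring

lemma hasSum_log_term {q : ℝ} (hq : 0 < q) (hq1 : q < 1) (x : ℝ) (hx : 0 ≤ x) (n : ℕ) :
    HasSum (fun k : ℕ => -(q ^ ((n + 1) * (k + 1)) / ((k : ℝ) + 1))
        * Real.exp (((k : ℝ) + 1) * Real.log q * x))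
      (Real.log (1 - q ^ (x + (n : ℝ) + 1))) := by
  set t := q ^ (x + (n : ℝ) + 1) with ht
  have ht0 : 0 < t := Real.rpow_pos_of_pos hq _
  have ht1 : t < 1 := Real.rpow_lt_one hq.le hq1 (by positivity)
  have h := (Real.hasSum_pow_div_log_of_abs_lt_one (x := t)
    (by rw [abs_of_pos ht0]; exact ht1)).neg
  rw [neg_neg] at h
  refine h.congr_fun fun k => ?_
  have hpow : t ^ (k + 1) = q ^ (((n + 1) * (k + 1) : ℕ) : ℝ) * q ^ (x * ((k : ℝ) + 1)) := by
    rw [ht, ← Real.rpow_natCast (q ^ (x + (n : ℝ) + 1)) (k + 1), ← Real.rpow_mul hq.le,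
      ← Real.rpow_add hq]
    congr 1
    push_cast
    ring
  rw [hpow, Real.rpow_natCast, Real.rpow_def_of_pos hq]
  rw [show Real.log q * (x * ((k : ℝ) + 1)) = ((k : ℝ) + 1) * Real.log q * x by ring]
  push_cast
  ring

lemma cR_nonneg (r n : ℕ) : 0 ≤ cR r n := Nat.cast_nonneg _

lemma abs_aC {q : ℝ} (hq : 0 < q) (r : ℕ) (p : ℕ × ℕ) :
    |aC q r p| = cR r p.1 * q ^ ((p.1 + 1) * (p.2 + 1)) / ((p.2 : ℝ) + 1) := by
  rw [aC, abs_div, abs_mul, abs_mul, abs_pow, abs_neg, abs_one, one_pow, one_mul,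
    abs_of_nonneg (cR_nonneg r p.1), abs_of_nonneg (by positivity : (0:ℝ) ≤ q ^ ((p.1+1)*(p.2+1))),
    abs_of_nonneg (by positivity : (0:ℝ) ≤ (p.2 : ℝ) + 1)]

lemma term_bound {q : ℝ} (hq : 0 < q) (hq1 : q < 1) (r j : ℕ) (hj : j ≤ r + 1)
    (p : ℕ × ℕ) {x : ℝ} (hx : 0 ≤ x) :
    |aC q r p * bC q p ^ j * Real.exp (bC q p * x)| ≤ uB q r p := by
  have hL : Real.log q < 0 := Real.log_neg hq hq1
  have hbneg : bC q p ≤ 0 := by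
    rw [bC]
    exact mul_nonpos_iff.mpr (Or.inl ⟨by positivity, hL.le⟩)
  have h1 : |bC q p| ≤ 1 + ((p.2 : ℝ) + 1) * |Real.log q| := by
    rw [bC, abs_mul, abs_of_nonneg (by positivity : (0:ℝ) ≤ (p.2 : ℝ) + 1)]
    linarith [mul_nonneg (by positivity : (0:ℝ) ≤ (p.2 : ℝ) + 1) (abs_nonneg (Real.log q))]
  have hbase : (1:ℝ) ≤ 1 + ((p.2 : ℝ) + 1) * |Real.log q| := by
    have := mul_nonneg (by positivity : (0:ℝ) ≤ (p.2 : ℝ) + 1) (abs_nonneg (Real.log q))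
    linarith
  have e1 : |bC q p| ^ j ≤ (1 + ((p.2 : ℝ) + 1) * |Real.log q|) ^ (r + 1) :=
    le_trans (pow_le_pow_left₀ (abs_nonneg _) h1 j) (pow_le_pow_right₀ hbase hj)
  have e2 : Real.exp (bC q p * x) ≤ 1 :=
    Real.exp_le_one_iff.mpr (mul_nonpos_iff.mpr (Or.inr ⟨hbneg, hx⟩))
  rw [abs_mul, abs_mul, abs_pow, Real.abs_exp]
  calc |aC q r p| * |bC q p| ^ j * Real.exp (bC q p * x)
      ≤ |aC q r p| * (1 + ((p.2 : ℝ) + 1) * |Real.log q|) ^ (r + 1) * 1 :=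
        mul_le_mul (mul_le_mul_of_nonneg_left e1 (abs_nonneg _)) e2
          (Real.exp_pos _).le (by positivity)
    _ = uB q r p := by rw [mul_one, uB]

set_option maxHeartbeats 2000000 in
lemma summable_uB {q : ℝ} (hq : 0 < q) (hq1 : q < 1) (r : ℕ) (hr : 1 ≤ r) :
    Summable (uB q r) := by
  have h0L : (0:ℝ) ≤ |Real.log q| := abs_nonneg _
  have hf : Summable (fun n : ℕ => (((n : ℝ) + r) ^ r * q ^ n) * q) :=
    (summable_shift_pow_mul_geometric r hq.le hq1).mul_right _
  have hg : Summable (fun k : ℕ =>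
      (((k : ℝ) + 1) ^ (r + 1) * q ^ k) * (1 + |Real.log q|) ^ (r + 1)) :=
    (summable_add_one_pow_mul_geometric (r + 1)
      (by rw [abs_of_nonneg hq.le]; exact hq1)).mul_right _
  have hprod : Summable (fun p : ℕ × ℕ =>
      ((((p.1 : ℝ) + r) ^ r * q ^ p.1) * q) *
        ((((p.2 : ℝ) + 1) ^ (r + 1) * q ^ p.2) * (1 + |Real.log q|) ^ (r + 1))) :=
    hf.mul_of_nonneg hg (fun n => by positivity) (fun k => by positivity)
  refine Summable.of_nonneg_of_le (fun p => ?_) (fun p => ?_) hprod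
  · rw [uB]
    positivity
  · obtain ⟨n, k⟩ := p
    rw [uB, abs_aC hq]
    have hq1' : q ^ ((n + 1) * (k + 1)) ≤ q ^ (n + 1 + k) :=
      pow_le_pow_of_le_one hq.le hq1.le (by nlinarith)
    have hc : cR r n ≤ ((n : ℝ) + r) ^ r := choose_le_bound r r n le_rfl hr
    have hbb : 1 + ((k : ℝ) + 1) * |Real.log q| ≤ ((k : ℝ) + 1) * (1 + |Real.log q|) := by
      have h1 : (1:ℝ) ≤ (k : ℝ) + 1 := by
        have : (0:ℝ) ≤ (k:ℝ) := Nat.cast_nonneg k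
        linarith
      nlinarith
    have hbbp : (1 + ((k : ℝ) + 1) * |Real.log q|) ^ (r + 1)
        ≤ ((k : ℝ) + 1) ^ (r + 1) * (1 + |Real.log q|) ^ (r + 1) := by
      rw [← mul_pow]
      refine pow_le_pow_left₀ ?_ hbb _
      have := mul_nonneg (by positivity : (0:ℝ) ≤ (k : ℝ) + 1) h0L
      linarith
    have hdiv : cR r n * q ^ ((n + 1) * (k + 1)) / ((k : ℝ) + 1)
        ≤ cR r n * (q ^ (n + 1) * q ^ k) := by
      rw [div_le_iff₀ (by positivity : (0:ℝ) < (k : ℝ) + 1)]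
      calc cR r n * q ^ ((n + 1) * (k + 1)) ≤ cR r n * q ^ (n + 1 + k) :=
            mul_le_mul_of_nonneg_left hq1' (cR_nonneg r n)
        _ = cR r n * (q ^ (n + 1) * q ^ k) := by rw [pow_add]
        _ ≤ cR r n * (q ^ (n + 1) * q ^ k) * ((k : ℝ) + 1) := by
            have hnn : 0 ≤ cR r n * (q ^ (n + 1) * q ^ k) :=
              mul_nonneg (cR_nonneg r n) (by positivity)
            have hk1 : (1:ℝ) ≤ (k:ℝ) + 1 := by
              have : (0:ℝ) ≤ (k:ℝ) := Nat.cast_nonneg k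
              linarith
            nlinarith
    have hP : cR r n * (q ^ (n + 1) * q ^ k) ≤ (((n : ℝ) + r) ^ r * q ^ n * q) * q ^ k := by
      rw [pow_succ]
      calc cR r n * (q ^ n * q * q ^ k) ≤ (((n : ℝ) + r) ^ r) * (q ^ n * q * q ^ k) :=
            mul_le_mul_of_nonneg_right hc (by positivity)
        _ = (((n : ℝ) + r) ^ r * q ^ n * q) * q ^ k := by ring
    calc cR r n * q ^ ((n + 1) * (k + 1)) / ((k : ℝ) + 1)
          * (1 + ((k : ℝ) + 1) * |Real.log q|) ^ (r + 1)
        ≤ (cR r n * (q ^ (n + 1) * q ^ k)) *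
            (((k : ℝ) + 1) ^ (r + 1) * (1 + |Real.log q|) ^ (r + 1)) := by
          refine mul_le_mul hdiv hbbp (by positivity) ?_
          exact mul_nonneg (cR_nonneg r n) (by positivity)
      _ ≤ ((((n : ℝ) + r) ^ r * q ^ n * q) * q ^ k) *
            (((k : ℝ) + 1) ^ (r + 1) * (1 + |Real.log q|) ^ (r + 1)) := by
          refine mul_le_mul_of_nonneg_right hP ?_
          have : (0:ℝ) ≤ 1 + |Real.log q| := by linarith
          positivity
      _ = ((((n : ℝ) + r) ^ r * q ^ n) * q) *
            ((((k : ℝ) + 1) ^ (r + 1) * q ^ k) * (1 + |Real.log q|) ^ (r + 1)) := by ring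

lemma summable_term {q : ℝ} (hq : 0 < q) (hq1 : q < 1) (r : ℕ) (hr : 1 ≤ r) (j : ℕ)
    (hj : j ≤ r + 1) {x : ℝ} (hx : 0 ≤ x) :
    Summable (fun p : ℕ × ℕ => aC q r p * bC q p ^ j * Real.exp (bC q p * x)) :=
  Summable.of_norm_bounded (g := uB q r) (summable_uB hq hq1 r hr)
    (fun p => by rw [Real.norm_eq_abs]; exact term_bound hq hq1 r j hj p hx)

lemma hasDerivAt_SS {q : ℝ} (hq : 0 < q) (hq1 : q < 1) (r : ℕ) (hr : 1 ≤ r) (j : ℕ)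
    (hj : j ≤ r) {x : ℝ} (hx : x ∈ Set.Ioi (0:ℝ)) :
    HasDerivAt (SS q r j) (SS q r (j + 1) x) x := by
  have key : HasDerivAt (fun z => ∑' p : ℕ × ℕ, aC q r p * bC q p ^ j * Real.exp (bC q p * z))
      (∑' p : ℕ × ℕ, aC q r p * bC q p ^ (j + 1) * Real.exp (bC q p * x)) x := by
    refine hasDerivAt_tsum_of_isPreconnected (𝕜 := ℝ) (F := ℝ)
      (g := fun p z => aC q r p * bC q p ^ j * Real.exp (bC q p * z))
      (g' := fun p z => aC q r p * bC q p ^ (j + 1) * Real.exp (bC q p * z))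
      (y₀ := 1) (summable_uB hq hq1 r hr) isOpen_Ioi
      isPreconnected_Ioi (fun p y hy => ?_) (fun p y hy => ?_)
      (by norm_num : (1:ℝ) ∈ Set.Ioi (0:ℝ)) ?_ hx
    · have h := (((hasDerivAt_id y).const_mul (bC q p)).exp).const_mul
        (aC q r p * bC q p ^ j)
      convert h using 1
      · rfl
      · rfl
      simp only [id_eq, mul_one]
      ring
    · rw [Real.norm_eq_abs]
      exact term_bound hq hq1 r (j + 1) (by omega) p (le_of_lt hy)
    · exact summable_term hq hq1 r hr j (by omega) (by norm_num)
  exact key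

lemma tendsto_SS {q : ℝ} (hq : 0 < q) (hq1 : q < 1) (r : ℕ) (hr : 1 ≤ r) :
    Tendsto (SS q r (r + 1)) atTop (𝓝 0) := by
  have hL : Real.log q < 0 := Real.log_neg hq hq1
  have hexp : Tendsto (fun x : ℝ => Real.exp (Real.log q * x)) atTop (𝓝 0) :=
    Real.tendsto_exp_atBot.comp <| (tendsto_const_mul_atBot_of_neg hL).mpr tendsto_id
  have hg : Tendsto (fun x : ℝ => (∑' p, uB q r p) * Real.exp (Real.log q * x)) atTop (𝓝 0) := by
    have := hexp.const_mul (∑' p, uB q r p)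
    simpa using this
  refine squeeze_zero_norm' ?_ hg
  filter_upwards [eventually_ge_atTop (0:ℝ)] with x hx
  have hsum : Summable (fun p : ℕ × ℕ => aC q r p * bC q p ^ (r + 1) * Real.exp (bC q p * x)) :=
    summable_term hq hq1 r hr (r + 1) le_rfl hx
  have hub : Summable (fun p : ℕ × ℕ => uB q r p * Real.exp (Real.log q * x)) :=
    (summable_uB hq hq1 r hr).mul_right _
  have hbound : ∀ p : ℕ × ℕ,
      ‖aC q r p * bC q p ^ (r + 1) * Real.exp (bC q p * x)‖
        ≤ uB q r p * Real.exp (Real.log q * x) := by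
    intro p
    have hbx : bC q p * x ≤ Real.log q * x := by
      rw [bC]
      have h1 : (0:ℝ) ≤ (p.2 : ℝ) := Nat.cast_nonneg _
      have h2 : (p.2:ℝ) * (Real.log q * x) ≤ 0 :=
        mul_nonpos_iff.mpr (Or.inl ⟨h1, mul_nonpos_iff.mpr (Or.inr ⟨hL.le, hx⟩)⟩)
      nlinarith [h2]
    have e2 : Real.exp (bC q p * x) ≤ Real.exp (Real.log q * x) := Real.exp_le_exp.mpr hbx
    have h1 : |bC q p| ≤ 1 + ((p.2 : ℝ) + 1) * |Real.log q| := by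
      rw [bC, abs_mul, abs_of_nonneg (by positivity : (0:ℝ) ≤ (p.2 : ℝ) + 1)]
      linarith [mul_nonneg (by positivity : (0:ℝ) ≤ (p.2 : ℝ) + 1) (abs_nonneg (Real.log q))]
    have e1 : |bC q p| ^ (r + 1) ≤ (1 + ((p.2 : ℝ) + 1) * |Real.log q|) ^ (r + 1) :=
      pow_le_pow_left₀ (abs_nonneg _) h1 _
    rw [Real.norm_eq_abs, abs_mul, abs_mul, abs_pow, Real.abs_exp, uB]
    calc |aC q r p| * |bC q p| ^ (r + 1) * Real.exp (bC q p * x)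
        ≤ |aC q r p| * (1 + ((p.2 : ℝ) + 1) * |Real.log q|) ^ (r + 1)
            * Real.exp (Real.log q * x) :=
          mul_le_mul (mul_le_mul_of_nonneg_left e1 (abs_nonneg _)) e2 (Real.exp_pos _).le
            (by positivity)
      _ = |aC q r p| * (1 + ((p.2 : ℝ) + 1) * |Real.log q|) ^ (r + 1)
            * Real.exp (Real.log q * x) := rfl
  calc ‖SS q r (r + 1) x‖
      ≤ ∑' p : ℕ × ℕ, ‖aC q r p * bC q p ^ (r + 1) * Real.exp (bC q p * x)‖ := by
        rw [SS]
        exact norm_tsum_le_tsum_norm hsum.norm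
    _ ≤ ∑' p : ℕ × ℕ, uB q r p * Real.exp (Real.log q * x) :=
        Summable.tsum_le_tsum hbound hsum.norm hub
    _ = (∑' p, uB q r p) * Real.exp (Real.log q * x) := tsum_mul_right

set_option maxHeartbeats 1000000 in
lemma logQG_eq {q : ℝ} (hq : 0 < q) (hq1 : q < 1) {r : ℕ} (hr : 1 ≤ r) {x : ℝ}
    (hx : 0 < x) :
    logQG q r x = (PP q r).eval x + SS q r 0 x := by
  have h1q : (0:ℝ) < 1 - q := by linarith
  set A : ℕ → ℝ := fun n => (-1:ℝ)^r * cR r n * Real.log (1 - q ^ (x + (n:ℝ) + 1)) with hA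
  set B : ℕ → ℝ := fun n =>
    (qgR r x (n+1) - (-1:ℝ)^r * cR r n) * Real.log (1 - q ^ (n+1)) with hB
  have hqn : ∀ n : ℕ, q ^ ((n:ℝ)+1) = q ^ (n+1) := by
    intro n
    rw [← Real.rpow_natCast q (n+1)]
    norm_num
  have hpos1 : ∀ n : ℕ, (0:ℝ) < 1 - q ^ (x + (n:ℝ) + 1) := by
    intro n
    have : q ^ (x + (n:ℝ) + 1) < 1 := Real.rpow_lt_one hq.le hq1 (by positivity)
    linarith
  have hpos2 : ∀ n : ℕ, (0:ℝ) < 1 - q ^ (n+1) := by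
    intro n
    have : q ^ (n+1) < 1 := pow_lt_one₀ hq.le hq1 (by omega)
    linarith
  have hqgR : ∀ n : ℕ, qgR r x (n+1)
      = ∑ m ∈ Finset.Icc 1 (r-1),
          (-1:ℝ)^(m-1) * binomR x (r-m) * (Nat.choose (n+m-1) (m-1) : ℝ) := by
    intro n
    rw [qgR]
    refine Finset.sum_congr rfl fun m hm => ?_
    have h1m : 1 ≤ m := (Finset.mem_Icc.mp hm).1
    have : n + 1 + m - 2 = n + m - 1 := by omega
    rw [this]
  have hrw : ∀ n : ℕ,
      ((-1 : ℝ) ^ r * (Nat.choose (n + 1 + r - 2) (r - 1)) *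
          Real.log ((1 - q ^ (x + (n:ℝ) + 1)) / (1 - q ^ ((n : ℝ) + 1)))
        + qgR r x (n + 1) * Real.log (1 - q ^ ((n : ℝ) + 1))) = A n + B n := by
    intro n
    have hc : n + 1 + r - 2 = n + r - 1 := by omega
    rw [hc, hqn n, Real.log_div (hpos1 n).ne' (hpos2 n).ne', hA, hB]
    simp only [cR]
    ring
  -- summability and tsum of A
  have hsumA : Summable A := by
    refine Summable.of_norm_bounded
      (g := fun n : ℕ => (((n:ℝ)+r)^r * q^n) * (q/(1-q))) 
      ((summable_shift_pow_mul_geometric r hq.le hq1).mul_right _) (fun n => ?_)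
    have ht : q ^ (x + (n:ℝ)+1) ≤ q ^ (n+1) := by
      rw [← hqn n]
      exact Real.rpow_le_rpow_of_exponent_ge hq hq1.le (by linarith)
    have ht0 : 0 < q ^ (x + (n:ℝ)+1) := Real.rpow_pos_of_pos hq _
    have hq1n : q ^ (n+1) ≤ q := by
      calc q ^ (n+1) ≤ q ^ 1 := pow_le_pow_of_le_one hq.le hq1.le (by omega)
        _ = q := pow_one q
    have htq : q ^ (x+(n:ℝ)+1) ≤ q := le_trans ht hq1n
    rw [hA, Real.norm_eq_abs]
    simp only []
    rw [abs_mul, abs_mul, abs_pow, abs_neg, abs_one, one_pow, one_mul,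
      abs_of_nonneg (cR_nonneg r n)]
    calc cR r n * |Real.log (1 - q ^ (x + (n:ℝ) + 1))|
        ≤ (((n:ℝ)+r)^r) * (q ^ (n+1) / (1-q)) := by
          refine mul_le_mul (choose_le_bound r r n le_rfl hr) ?_ (abs_nonneg _) (by positivity)
          exact (abs_log_one_sub_le hq1 ht0 htq).trans (by gcongr)
      _ = (((n:ℝ)+r)^r * q^n) * (q/(1-q)) := by
          rw [pow_succ]
          ring
  have hrow : ∀ n : ℕ, HasSum
      (fun k : ℕ => aC q r (n,k) * bC q (n,k) ^ 0 * Real.exp (bC q (n,k) * x)) (A n) := by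
    intro n
    have h := (hasSum_log_term hq hq1 x hx.le n).mul_left ((-1:ℝ)^r * cR r n)
    refine h.congr_fun fun k => ?_
    simp only [aC, bC, pow_zero, mul_one, pow_succ]
    ring
  have hSummTerm : Summable
      (fun p : ℕ × ℕ => aC q r p * bC q p ^ 0 * Real.exp (bC q p * x)) :=
    summable_term hq hq1 r hr 0 (by omega) hx.le
  have htsumA : ∑' n, A n = SS q r 0 x := by
    rw [SS]
    calc ∑' n, A n = ∑' (n) (k), aC q r (n,k) * bC q (n,k) ^ 0 * Real.exp (bC q (n,k) * x) :=
          tsum_congr fun n => ((hrow n).tsum_eq).symm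
      _ = ∑' p : ℕ × ℕ, aC q r p * bC q p ^ 0 * Real.exp (bC q p * x) :=
          (Summable.tsum_prod' hSummTerm fun n => (hrow n).summable).symm
  -- summability and tsum of B
  set v : ℕ → ℕ → ℝ := fun m n =>
    ((-1:ℝ)^(m-1) * binomR x (r-m)) * ((Nat.choose (n+m-1) (m-1) : ℝ)
      * Real.log (1 - q ^ (n+1))) with hv
  set w : ℕ → ℝ := fun n =>
    (-((-1:ℝ)^r)) * ((Nat.choose (n+r-1) (r-1) : ℝ) * Real.log (1 - q ^ (n+1))) with hw
  have hBeq : ∀ n, B n = (∑ m ∈ Finset.Icc 1 (r-1), v m n) + w n := by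
    intro n
    rw [hB]
    simp only []
    rw [hqgR n, sub_mul, Finset.sum_mul, sub_eq_add_neg]
    congr 1
    · refine Finset.sum_congr rfl fun m hm => ?_
      simp only [hv]
      ring
    · simp only [hw, cR]
      ring
  have hsum_v : ∀ m ∈ Finset.Icc 1 (r-1), Summable (v m) := fun m hm =>
    (summable_choose_log hq hq1 m (by have := (Finset.mem_Icc.mp hm).2; omega) hr).mul_left _
  have hsum_w : Summable w := (summable_choose_log hq hq1 r le_rfl hr).mul_left _
  have hsumB : Summable B :=
    (((summable_sum hsum_v).add hsum_w)).congr (fun n => (hBeq n).symm)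
  have htsumB : ∑' n, B n
      = (∑ m ∈ Finset.Icc 1 (r-1), ((-1:ℝ)^(m-1) * emQ q m) * binomR x (r-m))
        + (-((-1:ℝ)^r * emQ q r)) := by
    rw [tsum_congr hBeq, Summable.tsum_add (summable_sum hsum_v) hsum_w, Summable.tsum_finsetSum hsum_v]
    congr 1
    · refine Finset.sum_congr rfl fun m hm => ?_
      rw [hv]
      rw [tsum_mul_left]
      rw [emQ]
      ring
    · rw [hw, tsum_mul_left, emQ]
      ring
  have hPP : (PP q r).eval x = -(Real.log (1-q) * binomR x r)
      + (∑ m ∈ Finset.Icc 1 (r-1), ((-1:ℝ)^(m-1) * emQ q m) * binomR x (r-m))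
      + (-((-1:ℝ)^r * emQ q r)) := by
    simp [PP, Polynomial.eval_finset_sum, eval_bpoly]
  rw [logQG, tsum_congr hrw, Summable.tsum_add hsumA hsumB, htsumA, htsumB, hPP]
  ring

lemma iteratedDeriv_logQG {q : ℝ} (hq : 0 < q) (hq1 : q < 1) {r : ℕ} (hr : 1 ≤ r) :
    ∀ j, j ≤ r + 1 → ∀ x ∈ Set.Ioi (0:ℝ),
      iteratedDeriv j (logQG q r) x
        = (Polynomial.derivative^[j] (PP q r)).eval x + SS q r j x := by
  intro j
  induction j with
  | zero =>
    intro _ x hx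
    simpa [iteratedDeriv_zero] using logQG_eq hq hq1 hr hx
  | succ j ih =>
    intro hj x hx
    rw [iteratedDeriv_succ]
    have hev : iteratedDeriv j (logQG q r)
        =ᶠ[𝓝 x] fun y => (Polynomial.derivative^[j] (PP q r)).eval y + SS q r j y :=
      Filter.eventuallyEq_of_mem (isOpen_Ioi.mem_nhds hx) (fun y hy => ih (by omega) y hy)
    rw [hev.deriv_eq]
    have h1 : HasDerivAt (fun y => (Polynomial.derivative^[j] (PP q r)).eval y + SS q r j y)
        ((Polynomial.derivative^[j+1] (PP q r)).eval x + SS q r (j+1) x) x := by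
      rw [Function.iterate_succ_apply']
      exact (Polynomial.hasDerivAt _ x).add (hasDerivAt_SS hq hq1 r hr j (by omega) hx)
    exact h1.deriv

theorem stmt9 (q : ℝ) (hq : 0 < q) (hq1 : q < 1) (r : ℕ) (hr : 1 ≤ r) :
    Tendsto (fun x : ℝ => iteratedDeriv (r + 1) (logQG q r) x) atTop (𝓝 0) := by
  have hzero : Polynomial.derivative^[r+1] (PP q r) = 0 :=
    Polynomial.iterate_derivative_eq_zero
      (lt_of_le_of_lt (natDegree_PP_le q r) (Nat.lt_succ_self r))
  refine (tendsto_SS hq hq1 r hr).congr' ?_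
  filter_upwards [eventually_gt_atTop (0:ℝ)] with x hx
  rw [iteratedDeriv_logQG hq hq1 hr (r+1) le_rfl x hx, hzero]
  simp
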